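/- For all real numbers t and s with t² + s² ≠ 0, the Lie algebra 𝔫'_{t,s} is isomorphic, as a real Lie algebra, to the direct sum 𝔥₃ ⊕ ℝ³, where 𝔥₃ is the 3-dimensional real Heisenberg Lie algebra of strictly upper triangular 3×3 real matrices and ℝ³ is a 3-dimensional abelian Lie algebra. -/

import Mathlib

set_option maxHeartbeats 1000000

/-- The product of two Lie rings, with componentwise bracket. -/
instance prodLieRing {L M : Type*} [LieRing L] [LieRing M] : LieRing (L × M) where
  bracket x y := (⁅x.1, y.1⁆, ⁅x.2, y.2⁆)
  add_lie x y z := Prod.ext (add_lie x.1 y.1 z.1) (add_lie x.2 y.2 z.2)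
  lie_add x y z := Prod.ext (lie_add x.1 y.1 z.1) (lie_add x.2 y.2 z.2)
  lie_self x := Prod.ext (lie_self x.1) (lie_self x.2)
  leibniz_lie x y z := Prod.ext (leibniz_lie x.1 y.1 z.1) (leibniz_lie x.2 y.2 z.2)

/-- The product of two real Lie algebras, with componentwise structure. -/
instance prodLieAlgebra {L M : Type*} [LieRing L] [LieRing M]
    [LieAlgebra ℝ L] [LieAlgebra ℝ M] : LieAlgebra ℝ (L × M) where
  lie_smul t x y := Prod.ext (lie_smul t x.1 y.1) (lie_smul t x.2 y.2)

attribute [local instance 100] LieRing.ofAssociativeRing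

/-- The 3-dimensional real Heisenberg Lie algebra: strictly upper triangular `3 × 3` real
matrices, with the commutator bracket. -/
def realHeisenberg : LieSubalgebra ℝ (Matrix (Fin 3) (Fin 3) ℝ) where
  carrier := {M | ∀ i j : Fin 3, j ≤ i → M i j = 0}
  add_mem' := fun ha hb i j hij => by
    simp only [Matrix.add_apply, ha i j hij, hb i j hij, add_zero]
  zero_mem' := fun i j _ => rfl
  smul_mem' := fun c M hM i j hij => by
    simp only [Matrix.smul_apply, hM i j hij, smul_zero]
  lie_mem' := by
    intro x y hx hy i j hij
    rw [Ring.lie_def]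
    simp only [Matrix.sub_apply, Matrix.mul_apply]
    rw [Finset.sum_eq_zero, Finset.sum_eq_zero, sub_zero]
    · intro k _
      rcases le_or_gt k i with h | h
      · rw [hy i k h, zero_mul]
      · rw [hx k j (hij.trans h.le), mul_zero]
    · intro k _
      rcases le_or_gt k i with h | h
      · rw [hx i k h, zero_mul]
      · rw [hy k j (hij.trans h.le), mul_zero]

-- auxiliary defs
def heisE (i j : Fin 3) (h : i < j) : realHeisenberg :=
  ⟨Matrix.single i j 1, by
    intro a b hab
    simp only [Matrix.single, Matrix.of_apply, ite_eq_right_iff]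
    rintro ⟨rfl, rfl⟩
    exact absurd hab (not_le.mpr h)⟩

def E01 : realHeisenberg := heisE 0 1 (by decide)
def E12 : realHeisenberg := heisE 1 2 (by decide)
def E02 : realHeisenberg := heisE 0 2 (by decide)

lemma E01_val : (E01 : Matrix (Fin 3) (Fin 3) ℝ) = Matrix.single 0 1 1 := rfl
lemma E12_val : (E12 : Matrix (Fin 3) (Fin 3) ℝ) = Matrix.single 1 2 1 := rfl
lemma E02_val : (E02 : Matrix (Fin 3) (Fin 3) ℝ) = Matrix.single 0 2 1 := rfl

lemma realHeis_val_smul (a : ℝ) (x : realHeisenberg) :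
    ((a • x : realHeisenberg) : Matrix (Fin 3) (Fin 3) ℝ) = a • (x : Matrix (Fin 3) (Fin 3) ℝ) := rfl
lemma realHeis_val_add (x y : realHeisenberg) :
    ((x + y : realHeisenberg) : Matrix (Fin 3) (Fin 3) ℝ) = (x : Matrix (Fin 3) (Fin 3) ℝ) + (y : Matrix (Fin 3) (Fin 3) ℝ) := rfl
lemma realHeis_val_zero :
    ((0 : realHeisenberg) : Matrix (Fin 3) (Fin 3) ℝ) = 0 := rfl

lemma lie_E01_E12 : ⁅E01, E12⁆ = E02 := by
  apply Subtype.ext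
  rw [LieSubalgebra.coe_bracket, Ring.lie_def]
  show Matrix.single 0 1 1 * Matrix.single 1 2 1
      - Matrix.single 1 2 1 * Matrix.single 0 1 1 = Matrix.single 0 2 1
  rw [Matrix.single_mul_single_same, Matrix.single_mul_single_of_ne 1 1 2 0 (by decide)]
  simp

lemma lie_E12_E01 : ⁅E12, E01⁆ = -E02 := by
  rw [← lie_skew, lie_E01_E12]

lemma lie_E01_E02 : ⁅E01, E02⁆ = 0 := by
  apply Subtype.ext
  rw [LieSubalgebra.coe_bracket, Ring.lie_def]
  show Matrix.single 0 1 1 * Matrix.single 0 2 1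
      - Matrix.single 0 2 1 * Matrix.single 0 1 1 = 0
  rw [Matrix.single_mul_single_of_ne 1 0 1 0 (by decide), Matrix.single_mul_single_of_ne 1 0 2 0 (by decide)]
  simp

lemma lie_E12_E02 : ⁅E12, E02⁆ = 0 := by
  apply Subtype.ext
  rw [LieSubalgebra.coe_bracket, Ring.lie_def]
  show Matrix.single 1 2 1 * Matrix.single 0 2 1
      - Matrix.single 0 2 1 * Matrix.single 1 2 1 = 0
  rw [Matrix.single_mul_single_of_ne 1 1 2 0 (by decide), Matrix.single_mul_single_of_ne 1 0 2 1 (by decide)]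
  simp

lemma lie_E02_E01 : ⁅E02, E01⁆ = 0 := by rw [← lie_skew, lie_E01_E02, neg_zero]
lemma lie_E02_E12 : ⁅E02, E12⁆ = 0 := by rw [← lie_skew, lie_E12_E02, neg_zero]

lemma pi_lie_zero (x y : Fin 3 → ℝ) : ⁅x, y⁆ = 0 := by
  funext i
  show ⁅x i, y i⁆ = 0
  rw [Ring.lie_def]; ring

lemma prod_lie_def {A B : Type*} [LieRing A] [LieRing B] (x y : A × B) :
    ⁅x, y⁆ = (⁅x.1, y.1⁆, ⁅x.2, y.2⁆) := rfl

lemma map_lie_of_basis {L M : Type*} [LieRing L] [LieAlgebra ℝ L] [LieRing M] [LieAlgebra ℝ M]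
    {ι : Type*} (e : Module.Basis ι ℝ L) (f : L →ₗ[ℝ] M)
    (h : ∀ i j, f ⁅e i, e j⁆ = ⁅f (e i), f (e j)⁆) (x y : L) : f ⁅x, y⁆ = ⁅f x, f y⁆ := by
  let B1 : L →ₗ[ℝ] L →ₗ[ℝ] M := LinearMap.mk₂ ℝ (fun x y => f ⁅x, y⁆)
    (fun m n p => by rw [add_lie, map_add]) (fun c m n => by rw [smul_lie, map_smul])
    (fun m n p => by rw [lie_add, map_add]) (fun c m n => by rw [lie_smul, map_smul])
  let B2 : L →ₗ[ℝ] L →ₗ[ℝ] M := LinearMap.mk₂ ℝ (fun x y => ⁅f x, f y⁆)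
    (fun m n p => by rw [map_add, add_lie]) (fun c m n => by rw [map_smul, smul_lie])
    (fun m n p => by rw [map_add, lie_add]) (fun c m n => by rw [map_smul, lie_smul])
  have hB : B1 = B2 := LinearMap.ext_basis e e h
  exact LinearMap.congr_fun (LinearMap.congr_fun hB x) y


/-- For all real numbers `t` and `s` with `t² + s² ≠ 0`, the Lie algebra `𝔫'_{t,s}` — i.e. any
real Lie algebra with a basis `e₁, …, e₆` whose only nonzero brackets among basis vectors are
`[e₁,e₂] = −t² e₆`, `[e₁,e₄] = −ts e₆`, `[e₂,e₃] = ts e₆`, `[e₃,e₄] = −s² e₆` — is isomorphic,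
as a real Lie algebra, to the direct sum `𝔥₃ ⊕ ℝ³` of the 3-dimensional real Heisenberg Lie
algebra of strictly upper triangular `3 × 3` real matrices and a 3-dimensional abelian Lie
algebra. -/
theorem nts'_iso_heisenberg_sum_abelian (t s : ℝ) (hts : t ^ 2 + s ^ 2 ≠ 0)
    (L : Type) [LieRing L] [LieAlgebra ℝ L] (e : Module.Basis (Fin 6) ℝ L)
    (h01 : ⁅e 0, e 1⁆ = (-(t^2)) • e 5) (h03 : ⁅e 0, e 3⁆ = (-(t*s)) • e 5)
    (h12 : ⁅e 1, e 2⁆ = (t*s) • e 5) (h23 : ⁅e 2, e 3⁆ = (-(s^2)) • e 5)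
    (h02 : ⁅e 0, e 2⁆ = 0) (h13 : ⁅e 1, e 3⁆ = 0)
    (h04 : ⁅e 0, e 4⁆ = 0) (h05 : ⁅e 0, e 5⁆ = 0)
    (h14 : ⁅e 1, e 4⁆ = 0) (h15 : ⁅e 1, e 5⁆ = 0)
    (h24 : ⁅e 2, e 4⁆ = 0) (h25 : ⁅e 2, e 5⁆ = 0)
    (h34 : ⁅e 3, e 4⁆ = 0) (h35 : ⁅e 3, e 5⁆ = 0)
    (h45 : ⁅e 4, e 5⁆ = 0) :
    Nonempty (L ≃ₗ⁅ℝ⁆ (realHeisenberg × (Fin 3 → ℝ))) := by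
  classical
  have hc0 : (t^2 + s^2) ≠ 0 := hts
  let c : ℝ := t^2 + s^2
  have hcdef : c = t^2 + s^2 := rfl
  have hc0' : c ≠ 0 := hts
  let d : Fin 3 → (Fin 3 → ℝ) := fun i => Pi.single i 1
  let v : Fin 6 → (realHeisenberg × (Fin 3 → ℝ)) := fun i =>
    if i = 0 then ((t/c) • E01, (s/c) • d 0)
    else if i = 1 then ((-(t*c)) • E12, (s/c) • d 1)
    else if i = 2 then ((s/c) • E01, (-(t/c)) • d 0)
    else if i = 3 then ((-(s*c)) • E12, (-(t/c)) • d 1)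
    else if i = 4 then ((0 : realHeisenberg), d 2)
    else (E02, (0 : Fin 3 → ℝ))
  let φ : L →ₗ[ℝ] (realHeisenberg × (Fin 3 → ℝ)) := e.constr ℝ v
  have hφ0 : φ (e 0) = ((t/c) • E01, (s/c) • d 0) := by
    show (e.constr ℝ v) (e 0) = _; rw [Module.Basis.constr_basis]; rfl
  have hφ1 : φ (e 1) = ((-(t*c)) • E12, (s/c) • d 1) := by
    show (e.constr ℝ v) (e 1) = _; rw [Module.Basis.constr_basis]; rfl
  have hφ2 : φ (e 2) = ((s/c) • E01, (-(t/c)) • d 0) := by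
    show (e.constr ℝ v) (e 2) = _; rw [Module.Basis.constr_basis]; rfl
  have hφ3 : φ (e 3) = ((-(s*c)) • E12, (-(t/c)) • d 1) := by
    show (e.constr ℝ v) (e 3) = _; rw [Module.Basis.constr_basis]; rfl
  have hφ4 : φ (e 4) = ((0 : realHeisenberg), d 2) := by
    show (e.constr ℝ v) (e 4) = _; rw [Module.Basis.constr_basis]; rfl
  have hφ5 : φ (e 5) = (E02, (0 : Fin 3 → ℝ)) := by
    show (e.constr ℝ v) (e 5) = _; rw [Module.Basis.constr_basis]; rfl
  have h10 : ⁅e 1, e 0⁆ = (t^2) • e 5 := by rw [← lie_skew, h01, neg_smul, neg_neg]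
  have h30 : ⁅e 3, e 0⁆ = (t*s) • e 5 := by rw [← lie_skew, h03, neg_smul, neg_neg]
  have h21 : ⁅e 2, e 1⁆ = (-(t*s)) • e 5 := by rw [← lie_skew, h12, neg_smul]
  have h32 : ⁅e 3, e 2⁆ = (s^2) • e 5 := by rw [← lie_skew, h23, neg_smul, neg_neg]
  have h20 : ⁅e 2, e 0⁆ = 0 := by rw [← lie_skew, h02, neg_zero]
  have h31 : ⁅e 3, e 1⁆ = 0 := by rw [← lie_skew, h13, neg_zero]
  have h40 : ⁅e 4, e 0⁆ = 0 := by rw [← lie_skew, h04, neg_zero]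
  have h50 : ⁅e 5, e 0⁆ = 0 := by rw [← lie_skew, h05, neg_zero]
  have h41 : ⁅e 4, e 1⁆ = 0 := by rw [← lie_skew, h14, neg_zero]
  have h51 : ⁅e 5, e 1⁆ = 0 := by rw [← lie_skew, h15, neg_zero]
  have h42 : ⁅e 4, e 2⁆ = 0 := by rw [← lie_skew, h24, neg_zero]
  have h52 : ⁅e 5, e 2⁆ = 0 := by rw [← lie_skew, h25, neg_zero]
  have h43 : ⁅e 4, e 3⁆ = 0 := by rw [← lie_skew, h34, neg_zero]
  have h53 : ⁅e 5, e 3⁆ = 0 := by rw [← lie_skew, h35, neg_zero]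
  have h54 : ⁅e 5, e 4⁆ = 0 := by rw [← lie_skew, h45, neg_zero]
  have key : ∀ i j : Fin 6, φ ⁅e i, e j⁆ = ⁅φ (e i), φ (e j)⁆ := by
    intro i j
    fin_cases i <;> fin_cases j <;>
      simp only [Fin.zero_eta, Fin.mk_one, Fin.isValue, show (⟨2, by omega⟩ : Fin 6) = 2 from rfl,
        show (⟨3, by omega⟩ : Fin 6) = 3 from rfl, show (⟨4, by omega⟩ : Fin 6) = 4 from rfl,
        show (⟨5, by omega⟩ : Fin 6) = 5 from rfl,
        h01, h03, h12, h23, h02, h13, h04, h05, h14, h15, h24, h25, h34, h35, h45,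
        h10, h30, h21, h32, h20, h31, h40, h50, h41, h51, h42, h52, h43, h53, h54,
        lie_self, map_zero, map_smul, hφ0, hφ1, hφ2, hφ3, hφ4, hφ5, prod_lie_def,
        smul_lie, lie_smul, lie_zero, zero_lie, lie_E01_E12, lie_E12_E01, lie_E01_E02,
        lie_E12_E02, lie_E02_E01, lie_E02_E12, pi_lie_zero, smul_zero, smul_neg,
        map_neg, neg_lie, lie_neg, Prod.fst_zero, Prod.snd_zero, Prod.neg_mk, Prod.fst_neg, Prod.snd_neg, neg_inj,
        Prod.smul_mk, smul_smul, neg_smul, neg_neg, neg_zero] <;>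
      first
        | rfl
        | (refine Prod.ext ?_ ?_ <;>
            simp only [Prod.fst_zero, Prod.snd_zero] <;>
            first
              | rfl
              | (match_scalars <;> field_simp <;> ring))
  have hbrak : ∀ x y : L, φ ⁅x, y⁆ = ⁅φ x, φ y⁆ := map_lie_of_basis e φ key
  -- the inverse linear map
  let ψ : (realHeisenberg × (Fin 3 → ℝ)) →ₗ[ℝ] L :=
    { toFun := fun p =>
        ((p.1 : Matrix (Fin 3) (Fin 3) ℝ) 0 1) • (t • e 0 + s • e 2)
        + ((p.1 : Matrix (Fin 3) (Fin 3) ℝ) 1 2) • ((-(1/c^2)) • (t • e 1 + s • e 3))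
        + ((p.1 : Matrix (Fin 3) (Fin 3) ℝ) 0 2) • e 5
        + (p.2 0) • (s • e 0 - t • e 2)
        + (p.2 1) • (s • e 1 - t • e 3)
        + (p.2 2) • e 4
      map_add' := by
        intro p q
        simp only [Prod.fst_add, Prod.snd_add, realHeis_val_add, Matrix.add_apply,
          Pi.add_apply]
        module
      map_smul' := by
        intro r p
        simp only [Prod.smul_fst, Prod.smul_snd, realHeis_val_smul, Matrix.smul_apply,
          Pi.smul_apply, smul_eq_mul, RingHom.id_apply]
        module }
  have hψap : ∀ p : realHeisenberg × (Fin 3 → ℝ), ψ p =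
        ((p.1 : Matrix (Fin 3) (Fin 3) ℝ) 0 1) • (t • e 0 + s • e 2)
        + ((p.1 : Matrix (Fin 3) (Fin 3) ℝ) 1 2) • ((-(1/c^2)) • (t • e 1 + s • e 3))
        + ((p.1 : Matrix (Fin 3) (Fin 3) ℝ) 0 2) • e 5
        + (p.2 0) • (s • e 0 - t • e 2)
        + (p.2 1) • (s • e 1 - t • e 3)
        + (p.2 2) • e 4 := fun p => rfl
  -- left inverse
  have hleft : ∀ x : L, ψ (φ x) = x := by
    have hcomp : (ψ ∘ₗ φ) = LinearMap.id := by
      refine Module.Basis.ext e ?_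
      intro i
      fin_cases i <;>
        simp only [Fin.zero_eta, Fin.mk_one, Fin.isValue, show (⟨2, by omega⟩ : Fin 6) = 2 from rfl,
          show (⟨3, by omega⟩ : Fin 6) = 3 from rfl, show (⟨4, by omega⟩ : Fin 6) = 4 from rfl,
          show (⟨5, by omega⟩ : Fin 6) = 5 from rfl, LinearMap.comp_apply, LinearMap.id_apply,
          hφ0, hφ1, hφ2, hφ3, hφ4, hφ5] <;>
        rw [hψap] <;>
        simp only [realHeis_val_smul, realHeis_val_add, realHeis_val_zero,
          E01_val, E12_val, E02_val, Matrix.smul_apply,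
          Pi.smul_apply, smul_eq_mul, Matrix.single, Matrix.of_apply,
          ZeroMemClass.coe_zero, Matrix.zero_apply, Pi.zero_apply, d,
          Pi.single_apply] <;>
        simp only [Fin.reduceEq, and_self, and_true, and_false, true_and, false_and, if_true, if_false, ite_true, ite_false, mul_one, mul_zero,
          smul_zero, zero_smul, add_zero, zero_add, smul_smul] <;>
        match_scalars <;>
        field_simp <;>
        ring
    intro x
    exact DFunLike.congr_fun hcomp x
  -- images of the new basis vectors
  have hb0 : φ (t • e 0 + s • e 2) = (E01, (0 : Fin 3 → ℝ)) := by
    rw [map_add, map_smul, map_smul, hφ0, hφ2]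
    refine Prod.ext ?_ ?_ <;>
      simp only [Prod.smul_mk, Prod.mk_add_mk, Prod.fst_zero, Prod.snd_zero] <;>
      match_scalars <;> field_simp <;> ring
  have hb1 : φ ((-(1/c^2)) • (t • e 1 + s • e 3)) = (E12, (0 : Fin 3 → ℝ)) := by
    rw [map_smul, map_add, map_smul, map_smul, hφ1, hφ3]
    refine Prod.ext ?_ ?_ <;>
      simp only [Prod.smul_mk, Prod.mk_add_mk, Prod.fst_zero, Prod.snd_zero] <;>
      match_scalars <;> field_simp <;> ring
  have hb3 : φ (s • e 0 - t • e 2) = ((0 : realHeisenberg), d 0) := by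
    rw [map_sub, map_smul, map_smul, hφ0, hφ2]
    refine Prod.ext ?_ ?_ <;>
      simp only [Prod.smul_mk, Prod.mk_sub_mk, Prod.fst_zero, Prod.snd_zero] <;>
      match_scalars <;> field_simp <;> ring
  have hb4 : φ (s • e 1 - t • e 3) = ((0 : realHeisenberg), d 1) := by
    rw [map_sub, map_smul, map_smul, hφ1, hφ3]
    refine Prod.ext ?_ ?_ <;>
      simp only [Prod.smul_mk, Prod.mk_sub_mk, Prod.fst_zero, Prod.snd_zero] <;>
      match_scalars <;> field_simp <;> ring
  -- right inverse
  have hright : ∀ p : realHeisenberg × (Fin 3 → ℝ), φ (ψ p) = p := by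
    rintro ⟨⟨M, hM⟩, w⟩
    rw [hψap]
    simp only [map_add, map_smul, hb0, hb1, hb3, hb4, hφ4, hφ5]
    refine Prod.ext ?_ ?_
    · simp only [Prod.smul_mk, Prod.mk_add_mk, smul_zero, add_zero, zero_add]
      apply Subtype.ext
      simp only [realHeis_val_add, realHeis_val_smul, realHeis_val_zero,
        smul_zero, add_zero, zero_add, E01_val, E12_val, E02_val]
      ext i j
      fin_cases i <;> fin_cases j <;>
        simp [Matrix.single, Matrix.add_apply, Matrix.smul_apply,
          hM 0 0 (by decide), hM 1 0 (by decide), hM 1 1 (by decide), hM 2 0 (by decide),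
          hM 2 1 (by decide), hM 2 2 (by decide)]
    · simp only [Prod.smul_mk, Prod.mk_add_mk, smul_zero, add_zero, zero_add]
      funext j
      fin_cases j <;>
        simp [d, Pi.single_apply]
  -- assemble the Lie algebra equivalence
  refine ⟨{ toLinearMap := φ
            map_lie' := fun {x y} => hbrak x y
            invFun := ψ
            left_inv := hleft
            right_inv := hright }⟩
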